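/- Let H be a real Hilbert space, A ⊆ H a nonempty bounded symmetric set (A = −A), L > 0, f : H → ℝ a convex Fréchet-differentiable function whose gradient ∇f is L-Lipschitz, δ ∈ (0,1], and ρ > 0. Let x⋆ ∈ ρ·conv(A) satisfy f(x⋆) ≤ f(w) for all w ∈ ρ·conv(A). Let (x_t)_{t≥0} be a sequence with x_t ∈ ρ·conv(A) for every t, such that for every t there is z_t ∈ A with ⟪∇f(x_t), z_t⟫ ≤ δ·inf_{z∈A} ⟪∇f(x_t), z⟫ (a δ-approximate matching-pursuit LMO output), and x_{t+1} = x_t + γ_t z_t where γ_t = −⟪∇f(x_t), z_t⟫/(L‖z_t‖²) if z_t ≠ 0 and γ_t = 0 if z_t = 0. Then for every t ≥ 0, f(x_t) − f(x⋆) ≤ 4·((2/δ)·L·ρ²·radius(A)² + ε₀)/(δ·t + 4), where ε₀ := f(x₀) − f(x⋆). -/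

import Mathlib

open scoped RealInnerProductSpace Pointwise Classical

lemma mp_line_hasDerivAt {H : Type*} [NormedAddCommGroup H] [InnerProductSpace ℝ H] [CompleteSpace H]
    {f : H → ℝ} {f' : H → H} (hdiff : ∀ w, HasGradientAt f (f' w) w) (a v : H) (t : ℝ) :
    HasDerivAt (fun s : ℝ => f (a + s • v)) ⟪f' (a + t • v), v⟫ t := by
  have hc : HasDerivAt (fun s : ℝ => a + s • v) v t := by
    simpa using ((hasDerivAt_id t).smul_const v).const_add a
  have hf : HasFDerivAt f (InnerProductSpace.toDual ℝ H (f' (a + t • v))) (a + t • v) :=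
    hasGradientAt_iff_hasFDerivAt.mp (hdiff _)
  simpa [InnerProductSpace.toDual_apply_apply, Function.comp_def] using hf.comp_hasDerivAt t hc

lemma mp_grad_convex_ineq {H : Type*} [NormedAddCommGroup H] [InnerProductSpace ℝ H] [CompleteSpace H]
    {f : H → ℝ} {f' : H → H} (hconv : ConvexOn ℝ Set.univ f)
    (hdiff : ∀ w, HasGradientAt f (f' w) w) (a b : H) :
    f a + ⟪f' a, b - a⟫ ≤ f b := by
  have hφ : ConvexOn ℝ Set.univ (fun t : ℝ => f (a + t • (b - a))) := by
    have h := hconv.comp_affineMap (AffineMap.lineMap a b)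
    have hfun : (f ∘ (AffineMap.lineMap a b)) = fun t : ℝ => f (a + t • (b - a)) := by
      funext t
      simp [AffineMap.lineMap_apply, add_comm]
    have hpre : (AffineMap.lineMap a b : ℝ →ᵃ[ℝ] H) ⁻¹' Set.univ = Set.univ := by simp
    rw [hfun, hpre] at h
    exact h
  have hd : HasDerivAt (fun t : ℝ => f (a + t • (b - a))) ⟪f' a, b - a⟫ 0 := by
    simpa using mp_line_hasDerivAt hdiff a (b - a) 0
  have hs := hφ.le_slope_of_hasDerivAt (Set.mem_univ (0:ℝ)) (Set.mem_univ 1) one_pos hd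
  rw [slope_def_field] at hs
  simp only [zero_smul, add_zero, one_smul] at hs
  norm_num at hs
  linarith

lemma mp_descent {H : Type*} [NormedAddCommGroup H] [InnerProductSpace ℝ H] [CompleteSpace H]
    {f : H → ℝ} {f' : H → H} {L : ℝ}
    (hdiff : ∀ w, HasGradientAt f (f' w) w)
    (hLip : ∀ u v : H, ‖f' u - f' v‖ ≤ L * ‖u - v‖) (a v : H) :
    f (a + v) ≤ f a + ⟪f' a, v⟫ + L / 2 * ‖v‖ ^ 2 := by
  set φ : ℝ → ℝ := fun t => f (a + t • v) - t * ⟪f' a, v⟫ - L / 2 * t ^ 2 * ‖v‖ ^ 2 with hφdef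
  have hderiv : ∀ t : ℝ, HasDerivAt φ (⟪f' (a + t • v), v⟫ - ⟪f' a, v⟫ - L * t * ‖v‖ ^ 2) t := by
    intro t
    have h1 := mp_line_hasDerivAt hdiff a v t
    have h2 : HasDerivAt (fun t : ℝ => t * ⟪f' a, v⟫) ⟪f' a, v⟫ t := by
      simpa using (hasDerivAt_id t).mul_const ⟪f' a, v⟫
    have h3 : HasDerivAt (fun t : ℝ => L / 2 * t ^ 2 * ‖v‖ ^ 2) (L * t * ‖v‖ ^ 2) t := by
      have := ((hasDerivAt_pow 2 t).const_mul (L / 2)).mul_const (‖v‖ ^ 2)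
      have e : L / 2 * ((2:ℕ) * t ^ (2 - 1)) * ‖v‖ ^ 2 = L * t * ‖v‖ ^ 2 := by
        simp only [Nat.cast_ofNat, show (2:ℕ) - 1 = 1 from rfl, pow_one]
        ring
      rw [e] at this
      exact this
    exact (h1.sub h2).sub h3
  have hmono : AntitoneOn φ (Set.Icc (0:ℝ) 1) := by
    apply antitoneOn_of_deriv_nonpos (convex_Icc 0 1)
    · exact fun t _ => ((hderiv t).continuousAt).continuousWithinAt
    · intro t ht
      exact ((hderiv t).differentiableAt).differentiableWithinAt
    · intro t ht
      rw [interior_Icc] at ht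
      rw [(hderiv t).deriv]
      have h4 : ⟪f' (a + t • v) - f' a, v⟫ ≤ ‖f' (a + t • v) - f' a‖ * ‖v‖ :=
        real_inner_le_norm _ _
      have h5 : ‖f' (a + t • v) - f' a‖ ≤ L * ‖t • v‖ := by
        simpa using hLip (a + t • v) a
      have h6 : ‖t • v‖ = t * ‖v‖ := by
        rw [norm_smul, Real.norm_eq_abs, abs_of_pos ht.1]
      have h7 : ⟪f' (a + t • v) - f' a, v⟫ = ⟪f' (a + t • v), v⟫ - ⟪f' a, v⟫ :=
        inner_sub_left _ _ _
      rw [h6] at h5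
      have h8 : ‖f' (a + t • v) - f' a‖ * ‖v‖ ≤ L * t * ‖v‖ * ‖v‖ := by
        nlinarith [norm_nonneg v, norm_nonneg (f' (a + t • v) - f' a)]
      nlinarith [h4, h7, h8]
  have h01 := hmono (Set.left_mem_Icc.mpr zero_le_one) (Set.right_mem_Icc.mpr zero_le_one)
    zero_le_one
  simp only [hφdef, zero_smul, add_zero, one_smul, zero_mul, one_mul, one_pow] at h01
  have : (0:ℝ)^2 = 0 := by norm_num
  rw [this] at h01
  simp at h01
  linarith
set_option maxHeartbeats 2000000 in
/-- Sublinear convergence of Norm-Corrective Generalized Matching Pursuit with a δ-approximate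
linear minimization oracle (Theorem 2 / `thm:inexactMP`). -/
theorem matchingPursuit_sublinear_convergence
    {H : Type*} [NormedAddCommGroup H] [InnerProductSpace ℝ H] [CompleteSpace H]
    (A : Set H) (hA : A.Nonempty) (hAbdd : Bornology.IsBounded A)
    (hsym : A = -A)
    (L : ℝ) (hL : 0 < L)
    (f : H → ℝ) (f' : H → H)
    (hconv : ConvexOn ℝ Set.univ f)
    (hdiff : ∀ w : H, HasGradientAt f (f' w) w)
    (hLip : ∀ u v : H, ‖f' u - f' v‖ ≤ L * ‖u - v‖)
    (δ : ℝ) (hδ : δ ∈ Set.Ioc (0:ℝ) 1)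
    (ρ : ℝ) (hρ : 0 < ρ)
    (xstar : H) (hxstar : xstar ∈ ρ • convexHull ℝ A)
    (hmin : ∀ w ∈ ρ • convexHull ℝ A, f xstar ≤ f w)
    (x z : ℕ → H)
    (hxmem : ∀ t, x t ∈ ρ • convexHull ℝ A)
    (hzA : ∀ t, z t ∈ A)
    (hlmo : ∀ t, ⟪f' (x t), z t⟫ ≤ δ * sInf ((fun w => ⟪f' (x t), w⟫) '' A))
    (hupd : ∀ t, x (t + 1) =
        x t + (if z t = 0 then (0:ℝ) else -⟪f' (x t), z t⟫ / (L * ‖z t‖ ^ 2)) • z t) :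
    ∀ t : ℕ, f (x t) - f xstar ≤
      4 * ((2 / δ) * L * ρ ^ 2 * (sSup ((fun w : H => ‖w‖) '' A)) ^ 2 + (f (x 0) - f xstar))
        / (δ * t + 4) := by
  obtain ⟨hδ0, hδ1⟩ := hδ
  set r : ℝ := sSup ((fun w : H => ‖w‖) '' A) with hrdef
  obtain ⟨C, hC⟩ := isBounded_iff_forall_norm_le.mp hAbdd
  have hbddnorm : BddAbove ((fun w : H => ‖w‖) '' A) := by
    refine ⟨C, ?_⟩
    rintro _ ⟨a, ha, rfl⟩
    exact hC a ha
  obtain ⟨a₀, ha₀⟩ := hA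
  have hr0 : 0 ≤ r := le_trans (norm_nonneg a₀) (le_csSup hbddnorm ⟨a₀, ha₀, rfl⟩)
  have hzr : ∀ t, ‖z t‖ ≤ r := fun t => le_csSup hbddnorm ⟨z t, hzA t, rfl⟩
  have hh0 : ∀ t, 0 ≤ f (x t) - f xstar := fun t => sub_nonneg.mpr (hmin _ (hxmem t))
  -- key inequality :  ⟪∇f(x_t), z_t⟫ ≤ -(δ/(2ρ)) h_t
  have key : ∀ t, ⟪f' (x t), z t⟫ ≤ -(δ / (2 * ρ)) * (f (x t) - f xstar) := by
    intro t
    set g := f' (x t) with hg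
    obtain ⟨u, hu, hux⟩ := Set.mem_smul_set.mp hxstar
    obtain ⟨v, hv, hvx⟩ := Set.mem_smul_set.mp (hxmem t)
    have hnegv : -v ∈ convexHull ℝ A := by
      have h1 : -v ∈ -(convexHull ℝ A) := Set.neg_mem_neg.mpr hv
      rwa [← convexHull_neg, ← hsym] at h1
    set m := ((1:ℝ)/2) • u + ((1:ℝ)/2) • (-v) with hmdef
    have hm : m ∈ convexHull ℝ A :=
      (convex_convexHull ℝ A) hu hnegv (by norm_num) (by norm_num) (by norm_num)
    have hbddS : BddBelow ((fun w => ⟪g, w⟫) '' A) := by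
      refine ⟨-(‖g‖ * C), ?_⟩
      rintro _ ⟨a, ha, rfl⟩
      have h1 := abs_real_inner_le_norm g a
      have h2 := hC a ha
      have h3 := norm_nonneg g
      have h4 := (abs_le.mp h1).1
      nlinarith
    have hSconv : Convex ℝ {y : H | sInf ((fun w => ⟪g, w⟫) '' A) ≤ ⟪g, y⟫} := by
      apply convex_halfSpace_ge (f := fun y : H => ⟪g, y⟫)
      exact ⟨fun a b => inner_add_right g a b, fun c a => real_inner_smul_right g a c⟩
    have hsubset : A ⊆ {y : H | sInf ((fun w => ⟪g, w⟫) '' A) ≤ ⟪g, y⟫} :=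
      fun a ha => csInf_le hbddS ⟨a, ha, rfl⟩
    have hmlow : sInf ((fun w => ⟪g, w⟫) '' A) ≤ ⟪g, m⟫ :=
      convexHull_min hsubset hSconv hm
    have hsmul : (2 * ρ) • m = xstar - x t := by
      rw [hmdef, ← hux, ← hvx]
      module
    have hinner : ⟪g, xstar - x t⟫ = (2 * ρ) * ⟪g, m⟫ := by
      rw [← hsmul, real_inner_smul_right]
    have hgrad := mp_grad_convex_ineq hconv hdiff (x t) xstar
    have h1 : ⟪g, z t⟫ ≤ δ * sInf ((fun w => ⟪g, w⟫) '' A) := hlmo t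
    have h2 : δ * sInf ((fun w => ⟪g, w⟫) '' A) ≤ δ * ⟪g, m⟫ :=
      mul_le_mul_of_nonneg_left hmlow hδ0.le
    have h4 : δ * ⟪g, xstar - x t⟫ ≤ δ * (f xstar - f (x t)) :=
      mul_le_mul_of_nonneg_left (by linarith) hδ0.le
    have h5 : δ * ⟪g, m⟫ ≤ δ * (f xstar - f (x t)) / (2 * ρ) := by
      rw [hinner] at h4
      rw [le_div_iff₀ (by positivity)]
      nlinarith
    have h6 : δ * (f xstar - f (x t)) / (2 * ρ) = -(δ / (2 * ρ)) * (f (x t) - f xstar) := by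
      field_simp
      ring
    linarith
  -- case r = 0
  rcases eq_or_lt_of_le hr0 with hr | hr
  · have hzero : ∀ t, f (x t) - f xstar = 0 := by
      intro t
      have hz0 : z t = 0 := by
        have := hzr t
        rw [← hr] at this
        simpa using le_antisymm this (norm_nonneg _)
      have hk := key t
      rw [hz0] at hk
      simp only [inner_zero_right] at hk
      have hpos : 0 < δ / (2 * ρ) := by positivity
      nlinarith [hh0 t]
    intro t
    rw [hzero t, hzero 0, ← hr]
    have : 4 * ((2 / δ) * L * ρ ^ 2 * (0:ℝ) ^ 2 + 0) / (δ * t + 4) = 0 := by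
      norm_num
    rw [this]
  -- main case r > 0
  · set c : ℝ := δ ^ 2 / (8 * L * ρ ^ 2 * r ^ 2) with hcdef
    have hc : 0 < c := by positivity
    -- per-step decrease
    have step : ∀ t, f (x (t + 1)) - f xstar ≤
        (f (x t) - f xstar) - c * (f (x t) - f xstar) ^ 2 := by
      intro t
      by_cases hz0 : z t = 0
      · have hx1 : x (t + 1) = x t := by
          rw [hupd t, if_pos hz0, zero_smul, add_zero]
        have hk := key t
        rw [hz0] at hk
        simp only [inner_zero_right] at hk
        have hpos : 0 < δ / (2 * ρ) := by positivity
        have h0 : f (x t) - f xstar = 0 := by nlinarith [hh0 t]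
        rw [hx1, h0]
        norm_num
      · set G := ⟪f' (x t), z t⟫ with hGdef
        set nz := ‖z t‖ with hnzdef
        have hnz : 0 < nz := norm_pos_iff.mpr hz0
        set γ : ℝ := -G / (L * nz ^ 2) with hγdef
        have hx1 : x (t + 1) = x t + γ • z t := by
          rw [hupd t, if_neg hz0]
        have hdesc := mp_descent hdiff hLip (x t) (γ • z t)
        have hin : ⟪f' (x t), γ • z t⟫ = γ * G := real_inner_smul_right _ _ _
        have hnsq : ‖γ • z t‖ ^ 2 = γ ^ 2 * nz ^ 2 := by
          rw [norm_smul, Real.norm_eq_abs, mul_pow, sq_abs]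
        rw [hin, hnsq] at hdesc
        have heq : γ * G + L / 2 * (γ ^ 2 * nz ^ 2) = -(G ^ 2 / (2 * L * nz ^ 2)) := by
          rw [hγdef]
          field_simp
          ring
        have hd : f (x (t + 1)) - f xstar ≤
            (f (x t) - f xstar) - G ^ 2 / (2 * L * nz ^ 2) := by
          rw [hx1]
          linarith [hdesc, heq]
        have hG2 : (δ / (2 * ρ)) ^ 2 * (f (x t) - f xstar) ^ 2 ≤ G ^ 2 := by
          have hk := key t
          have hpos : 0 ≤ δ / (2 * ρ) * (f (x t) - f xstar) := by
            have h9 : 0 < δ / (2 * ρ) := by positivity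
            exact mul_nonneg h9.le (hh0 t)
          have h10 : δ / (2 * ρ) * (f (x t) - f xstar) ≤ -G := by linarith
          have h11 := mul_self_le_mul_self hpos h10
          nlinarith [h11]
        have hfrac : c * (f (x t) - f xstar) ^ 2 ≤ G ^ 2 / (2 * L * nz ^ 2) := by
          rw [le_div_iff₀ (by positivity)]
          have e1 : c * (f (x t) - f xstar) ^ 2 * (2 * L * nz ^ 2) ≤
              c * (f (x t) - f xstar) ^ 2 * (2 * L * r ^ 2) := by
            apply mul_le_mul_of_nonneg_left _ (by positivity)
            have hnzr : nz ≤ r := by rw [hnzdef]; exact hzr t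
            nlinarith [mul_nonneg (mul_nonneg hL.le (sub_nonneg.mpr hnzr))
              (by linarith : (0:ℝ) ≤ r + nz)]
          have e2 : c * (f (x t) - f xstar) ^ 2 * (2 * L * r ^ 2) =
              (δ / (2 * ρ)) ^ 2 * (f (x t) - f xstar) ^ 2 := by
            rw [hcdef]
            field_simp
            ring
          linarith
        linarith
    -- the induction
    set K : ℝ := 4 * ((2 / δ) * L * ρ ^ 2 * r ^ 2 + (f (x 0) - f xstar)) with hKdef
    have hKpos : 0 < K := by
      have h1 : 0 < (2 / δ) * L * ρ ^ 2 * r ^ 2 := by positivity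
      have := hh0 0
      rw [hKdef]
      nlinarith
    have hcK : δ ≤ c * K := by
      have h1 : c * K = δ + 4 * c * (f (x 0) - f xstar) := by
        rw [hcdef, hKdef]
        field_simp
        ring
      nlinarith [mul_nonneg hc.le (hh0 0)]
    intro t
    induction t with
    | zero =>
      have hden : (δ * ((0:ℕ):ℝ) + 4) = 4 := by norm_num
      rw [hden, le_div_iff₀ (by norm_num)]
      have h1 : 0 < (2 / δ) * L * ρ ^ 2 * r ^ 2 := by positivity
      rw [hKdef] at *
      nlinarith [hh0 0]
    | succ t ih =>
      set a : ℝ := δ * t + 4 with hadef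
      have ha4 : 4 ≤ a := by
        have : 0 ≤ δ * t := by positivity
        linarith
      have hapos : 0 < a := by linarith
      have haδ : 0 < a + δ := by linarith
      have hha : (f (x t) - f xstar) * a ≤ K := by
        have := (le_div_iff₀ hapos).mp ih
        linarith
      have hcast : (δ * ((t:ℕ) + 1 : ℕ) + 4 : ℝ) = a + δ := by
        push_cast
        rw [hadef]
        ring
      rw [hcast, le_div_iff₀ haδ]
      set h : ℝ := f (x t) - f xstar with hhdef
      have hh : 0 ≤ h := hh0 t
      have hkey2 : (h - c * h ^ 2) * (a + δ) ≤ K := by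
        rcases le_or_gt (2 * c * K) a with hcase | hcase
        · -- small-stepsize regime
          have t3 : c * h * a ≤ c * K := by nlinarith
          have hch2 : c * h ≤ 1 / 2 := by nlinarith
          have t1 : 0 ≤ (K - h * a) * (a - c * h * a - c * K) := by
            apply mul_nonneg (by linarith)
            nlinarith
          have t5 : (h - c * h ^ 2) * a ^ 2 ≤ K * a - c * K ^ 2 := by nlinarith
          have t6 : (h - c * h ^ 2) * a ^ 2 * (a + δ) ≤ (K * a - c * K ^ 2) * (a + δ) :=
            mul_le_mul_of_nonneg_right t5 haδ.le
          have t7 : (K * a - c * K ^ 2) * (a + δ) ≤ K * a ^ 2 := by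
            have w1 : K * a * δ ≤ c * K ^ 2 * a := by
              nlinarith [mul_nonneg (mul_nonneg hKpos.le hapos.le) (sub_nonneg.mpr hcK)]
            have w2 : 0 ≤ c * K ^ 2 * δ := by positivity
            nlinarith
          nlinarith [mul_pos hapos hapos]
        · -- large-stepsize regime
          have s1 : 0 ≤ (2 * c * h - 1) ^ 2 * (a + δ) := by positivity
          have s2 : 4 * c * ((h - c * h ^ 2) * (a + δ)) ≤ a + δ := by nlinarith
          have s3 : a + δ ≤ 4 * (c * K) := by nlinarith
          have h4c : (0:ℝ) < 4 * c := by positivity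
          exact le_of_mul_le_mul_left (by nlinarith) h4c
      have hstep := step t
      have : (f (x (t + 1)) - f xstar) * (a + δ) ≤ (h - c * h ^ 2) * (a + δ) := by
        apply mul_le_mul_of_nonneg_right _ haδ.le
        rw [hhdef]
        linarith
      linarith
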